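/- Let G be a group densely generated by a finite generating set X, and let π : F_X → G be the induced surjection from the free group F_X on X. Then there is no finite subset R ⊆ F_X whose normal closure in F_X equals the kernel of π; that is, G admits no finite presentation over X. -/

import Mathlib

/-- A group `G` is densely generated by the (finite) family `x : ι → G` if there are
constants `1 ≤ E < F` and `N₀` so that for every `n ≥ N₀` there is a word `w` over
`x^{±1}` which evaluates to `1` in `G`, whose length lies in `[E*n, F*n]`, and such that
whenever the image of `w` in the free group is written as a product of conjugates
`ρ̄ᵢ ūᵢ ρ̄ᵢ⁻¹` of words `uᵢ` evaluating to `1` in `G`, some `uⱼ` has length `> n`. -/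
def DenselyGeneratedBy {G : Type*} [Group G] {ι : Type*} (x : ι → G) : Prop :=
  ∃ E F N₀ : ℕ, 1 ≤ E ∧ E < F ∧ ∀ n ≥ N₀, ∃ w : List (ι × Bool),
    FreeGroup.lift x (FreeGroup.mk w) = 1 ∧
    E * n ≤ w.length ∧ w.length ≤ F * n ∧
    ∀ (k : ℕ) (ρ u : Fin k → List (ι × Bool)),
      (∀ i, FreeGroup.lift x (FreeGroup.mk (u i)) = 1) →
      FreeGroup.mk w =
        (List.ofFn fun i =>
          FreeGroup.mk (ρ i) * FreeGroup.mk (u i) * (FreeGroup.mk (ρ i))⁻¹).prod →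
      ∃ j, n < (u j).length

theorem stmt_14 {G : Type*} [Group G] {ι : Type*} [Fintype ι]
    (x : ι → G) (hx : Subgroup.closure (Set.range x) = ⊤)
    (hdense : DenselyGeneratedBy x) :
    ¬ ∃ R : Finset (FreeGroup ι),
      Subgroup.normalClosure (R : Set (FreeGroup ι)) = (FreeGroup.lift x).ker := by
  classical
  rintro ⟨R, hR⟩
  obtain ⟨E, F, N₀, hE, hEF, hd⟩ := hdense
  set M : ℕ := R.sup fun r => max r.toWord.length r⁻¹.toWord.length with hM
  set n : ℕ := max N₀ M with hn
  obtain ⟨w, hw1, hlow, hhigh, hmin⟩ := hd n (le_max_left _ _)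
  -- mk w lies in the kernel, hence in the normal closure of R
  have hwk : FreeGroup.mk w ∈ Subgroup.normalClosure (R : Set (FreeGroup ι)) := by
    rw [hR]; exact hw1
  have hwm : FreeGroup.mk w ∈ Submonoid.closure
      (Group.conjugatesOfSet (R : Set (FreeGroup ι)) ∪
        (Group.conjugatesOfSet (R : Set (FreeGroup ι)))⁻¹) := by
    have := hwk
    rw [Subgroup.normalClosure] at this
    rwa [← Subgroup.mem_toSubmonoid, Subgroup.closure_toSubmonoid] at this
  obtain ⟨l, hl, hlp⟩ := Submonoid.exists_list_of_mem_closure hwm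
  -- each element of `l` is a conjugate of a short word of the kernel
  have key : ∀ y ∈ l, ∃ ρw uw : List (ι × Bool),
      FreeGroup.lift x (FreeGroup.mk uw) = 1 ∧ uw.length ≤ M ∧
      y = FreeGroup.mk ρw * FreeGroup.mk uw * (FreeGroup.mk ρw)⁻¹ := by
    intro y hy
    have hker : ∀ r ∈ R, FreeGroup.lift x r = 1 := by
      intro r hr
      have : r ∈ Subgroup.normalClosure (R : Set (FreeGroup ι)) :=
        Subgroup.subset_normalClosure hr
      rw [hR] at this; exact this
    rcases hl y hy with h | h
    · rcases Group.mem_conjugatesOfSet_iff.1 h with ⟨r, hr, hc⟩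
      rcases isConj_iff.1 hc with ⟨c, hcy⟩
      refine ⟨c.toWord, r.toWord, ?_, ?_, ?_⟩
      · rw [FreeGroup.mk_toWord]; exact hker r hr
      · exact le_trans (le_max_left _ _) (Finset.le_sup (f := fun r =>
          max r.toWord.length r⁻¹.toWord.length) hr)
      · rw [FreeGroup.mk_toWord, FreeGroup.mk_toWord]; exact hcy.symm
    · rcases Group.mem_conjugatesOfSet_iff.1 (Set.mem_inv.mp h) with ⟨r, hr, hc⟩
      rcases isConj_iff.1 hc with ⟨c, hcy⟩
      refine ⟨c.toWord, (r⁻¹).toWord, ?_, ?_, ?_⟩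
      · rw [FreeGroup.mk_toWord, map_inv, hker r hr, inv_one]
      · exact le_trans (le_max_right _ _) (Finset.le_sup (f := fun r =>
          max r.toWord.length r⁻¹.toWord.length) hr)
      · rw [FreeGroup.mk_toWord, FreeGroup.mk_toWord]
        have : y⁻¹ = c * r * c⁻¹ := hcy.symm
        calc y = (y⁻¹)⁻¹ := (inv_inv y).symm
          _ = (c * r * c⁻¹)⁻¹ := by rw [this]
          _ = c * r⁻¹ * c⁻¹ := by group
  have H : ∀ i : Fin l.length, ∃ ρw uw : List (ι × Bool),
      FreeGroup.lift x (FreeGroup.mk uw) = 1 ∧ uw.length ≤ M ∧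
      l.get i = FreeGroup.mk ρw * FreeGroup.mk uw * (FreeGroup.mk ρw)⁻¹ :=
    fun i => key (l.get i) (l.get_mem i)
  choose ρ u h1 h2 h3 using H
  obtain ⟨j, hj⟩ := hmin l.length ρ u h1 (by
    have heq : (fun i : Fin l.length =>
        FreeGroup.mk (ρ i) * FreeGroup.mk (u i) * (FreeGroup.mk (ρ i))⁻¹) = l.get :=
      funext fun i => (h3 i).symm
    rw [heq, List.ofFn_get, hlp])
  exact absurd (le_trans (h2 j) (le_max_right N₀ M)) (not_le.mpr hj)
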